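/- arXiv:1506.00859 — 3 statements merged into one kernel-verified Lean document; each statement's English description precedes it below -/
import Mathlib

section
/- Let p ≥ 1 and let φ₀ ∈ ℝᵖ be such that the polynomial φ₀(z) = 1 − φ₀,₁ z − ⋯ − φ₀,ₚ zᵖ has no zeros in the closed complex unit disk {z : |z| ≤ 1}. Then there exist ε > 0, c ∈ (0,1) and K > 0 such that for every v ∈ ℝᵖ with max₁≤j≤p |vⱼ − φ₀,ⱼ| ≤ ε, the polynomial φ_v(z) = 1 − v₁ z − ⋯ − vₚ zᵖ has no zeros in the closed unit disk, the reciprocal 1/φ_v(z) admits a power series expansion ∑_{ℓ=0}^∞ π_ℓ(v) z^ℓ valid for |z| ≤ 1, and |π_j(v)| ≤ K cʲ for all j ≥ 0. -/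
open scoped BigOperators

/-- The autoregressive polynomial `φ_v(z) = 1 - v₁ z - ⋯ - vₚ zᵖ`, evaluated at `z ∈ ℂ`. -/
noncomputable def arEval (p : ℕ) (v : Fin p → ℝ) (z : ℂ) : ℂ :=
  1 - ∑ j : Fin p, (v j : ℂ) * z ^ ((j : ℕ) + 1)

/-- The coefficients `π_ℓ(v)` of the power-series expansion of the reciprocal `1/φ_v(z)`
at `z = 0` (the Taylor coefficients, realized as the coefficients of the formal
multiplicative inverse, which is legitimate since `φ_v(0) = 1 ≠ 0`). -/
noncomputable def arPiCoeff (p : ℕ) (v : Fin p → ℝ) (ℓ : ℕ) : ℝ :=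
  PowerSeries.coeff (R := ℝ) ℓ
    ((1 - ∑ j : Fin p, PowerSeries.monomial (R := ℝ) ((j : ℕ) + 1) (v j))⁻¹)

open scoped NNReal

/-! ### Auxiliary formal power series lemmas -/

noncomputable def arSeriesR (p : ℕ) (v : Fin p → ℝ) : PowerSeries ℝ :=
  1 - ∑ j : Fin p, PowerSeries.monomial (R := ℝ) ((j : ℕ) + 1) (v j)

lemma arPiCoeff_eq (p : ℕ) (v : Fin p → ℝ) (ℓ : ℕ) :
    arPiCoeff p v ℓ = PowerSeries.coeff (R := ℝ) ℓ (arSeriesR p v)⁻¹ := rfl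

lemma coeff_arSeriesR (p : ℕ) (v : Fin p → ℝ) (k : ℕ) :
    PowerSeries.coeff (R := ℝ) k (arSeriesR p v)
      = (if k = 0 then 1 else 0) - ∑ j : Fin p, (if k = (j : ℕ) + 1 then v j else 0) := by
  simp [arSeriesR, PowerSeries.coeff_one, PowerSeries.coeff_monomial]

lemma constantCoeff_arSeriesR (p : ℕ) (v : Fin p → ℝ) :
    PowerSeries.constantCoeff (R := ℝ) (arSeriesR p v) = 1 := by
  rw [← PowerSeries.coeff_zero_eq_constantCoeff, coeff_arSeriesR]
  simp

lemma coeff_arSeriesR_eq_zero (p : ℕ) (v : Fin p → ℝ) (k : ℕ) (hk : p < k) :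
    PowerSeries.coeff (R := ℝ) k (arSeriesR p v) = 0 := by
  rw [coeff_arSeriesR, if_neg (by omega), Finset.sum_eq_zero, sub_zero]
  intro j _
  have := j.isLt
  rw [if_neg (by omega)]

/-- The complexified coefficients of the autoregressive polynomial. -/
noncomputable def arCoeffC (p : ℕ) (v : Fin p → ℝ) (k : ℕ) : ℂ :=
  ((PowerSeries.coeff (R := ℝ) k (arSeriesR p v) : ℝ) : ℂ)

lemma arCoeffC_zero (p : ℕ) (v : Fin p → ℝ) : arCoeffC p v 0 = 1 := by
  rw [arCoeffC, coeff_arSeriesR]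
  simp

lemma arCoeffC_eq_zero (p : ℕ) (v : Fin p → ℝ) (k : ℕ) (hk : p < k) :
    arCoeffC p v k = 0 := by
  rw [arCoeffC, coeff_arSeriesR_eq_zero p v k hk]
  simp

lemma pi_conv (p : ℕ) (v : Fin p → ℝ) (m : ℕ) :
    ∑ ij ∈ Finset.HasAntidiagonal.antidiagonal m,
      PowerSeries.coeff (R := ℝ) ij.1 (arSeriesR p v)
        * PowerSeries.coeff (R := ℝ) ij.2 (arSeriesR p v)⁻¹
      = if m = 0 then 1 else 0 := by
  have h := PowerSeries.mul_inv_cancel (arSeriesR p v)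
    (by rw [constantCoeff_arSeriesR]; exact one_ne_zero)
  have h2 := congrArg (PowerSeries.coeff (R := ℝ) m) h
  rwa [PowerSeries.coeff_mul, PowerSeries.coeff_one] at h2

lemma pi_conv_C (p : ℕ) (v : Fin p → ℝ) (m : ℕ) :
    ∑ ij ∈ Finset.HasAntidiagonal.antidiagonal m,
      arCoeffC p v ij.1 * ((arPiCoeff p v ij.2 : ℝ) : ℂ)
      = if m = 0 then 1 else 0 := by
  have h1 := pi_conv p v m
  calc ∑ ij ∈ Finset.HasAntidiagonal.antidiagonal m, arCoeffC p v ij.1 * ((arPiCoeff p v ij.2 : ℝ) : ℂ)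
      = ((∑ ij ∈ Finset.HasAntidiagonal.antidiagonal m,
          PowerSeries.coeff (R := ℝ) ij.1 (arSeriesR p v)
            * PowerSeries.coeff (R := ℝ) ij.2 (arSeriesR p v)⁻¹ : ℝ) : ℂ) := by
        push_cast
        rfl
    _ = _ := by rw [h1]; split <;> simp

lemma conv_unique {c x y d : ℕ → ℂ} (hc : c 0 = 1)
    (hx : ∀ m, ∑ ij ∈ Finset.HasAntidiagonal.antidiagonal m, c ij.1 * x ij.2 = d m)
    (hy : ∀ m, ∑ ij ∈ Finset.HasAntidiagonal.antidiagonal m, c ij.1 * y ij.2 = d m) :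
    x = y := by
  have key : ∀ m, x m = y m := by
    intro m
    induction m using Nat.strong_induction_on with
    | _ m ih =>
      have hmem : ((0 : ℕ), m) ∈ Finset.HasAntidiagonal.antidiagonal m := by simp
      have hx' := hx m
      have hy' := hy m
      rw [← Finset.add_sum_erase _ _ hmem] at hx' hy'
      have hrest : ∑ ij ∈ (Finset.HasAntidiagonal.antidiagonal m).erase (0, m), c ij.1 * x ij.2
          = ∑ ij ∈ (Finset.HasAntidiagonal.antidiagonal m).erase (0, m), c ij.1 * y ij.2 := by
        refine Finset.sum_congr rfl fun ij hij => ?_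
        obtain ⟨hne, hmem2⟩ := Finset.mem_erase.mp hij
        have h2 := Finset.HasAntidiagonal.mem_antidiagonal.mp hmem2
        have hlt : ij.2 < m := by
          rcases Nat.eq_zero_or_pos ij.1 with h | h
          · exact absurd (Prod.ext h (by omega)) hne
          · omega
        rw [ih _ hlt]
      rw [hc, one_mul] at hx' hy'
      have := hx'.trans hy'.symm
      rw [hrest] at this
      exact add_right_cancel this
  funext m
  exact key m

lemma sum_range_ite_eq_antidiagonal {F G : ℕ → ℂ} {p m : ℕ}
    (hF : ∀ k, p < k → F k = 0) :
    ∑ k ∈ Finset.range (p + 1), (if k ≤ m then F k * G (m - k) else 0)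
      = ∑ ij ∈ Finset.HasAntidiagonal.antidiagonal m, F ij.1 * G ij.2 := by
  rw [Finset.Nat.sum_antidiagonal_eq_sum_range_succ_mk]
  have key : ∀ N : ℕ, m + 1 ≤ N →
      ∑ k ∈ Finset.range N, (if k ≤ m then F k * G (m - k) else 0)
        = ∑ k ∈ Finset.range (m + 1), F k * G (m - k) := by
    intro N hN
    rw [← Finset.sum_subset (Finset.range_subset_range.mpr hN)
      (fun x _ hx' => if_neg (by simp only [Finset.mem_range] at hx'; omega))]
    exact Finset.sum_congr rfl fun k hk =>
      if_pos (by simpa [Nat.lt_succ_iff] using Finset.mem_range.mp hk)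
  rcases le_or_gt (p + 1) (m + 1) with h | h
  · rw [Finset.sum_subset (Finset.range_subset_range.mpr h), key (m + 1) le_rfl]
    intro x _ hx'
    have hpx : p < x := by simpa [Nat.lt_succ_iff] using hx'
    rw [hF x hpx]
    simp
  · exact key (p + 1) (by omega)

/-! ### Power series with prescribed coefficients and uniqueness -/

lemma ofScalars_norm_le' (s : ℕ → ℂ) (n : ℕ) :
    ‖FormalMultilinearSeries.ofScalars ℂ s n‖ ≤ ‖s n‖ := by
  calc ‖FormalMultilinearSeries.ofScalars ℂ s n‖
      ≤ ‖s n‖ * ‖ContinuousMultilinearMap.mkPiAlgebraFin ℂ n ℂ‖ :=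
        ContinuousMultilinearMap.opNorm_smul_le _ _
    _ = ‖s n‖ := by rw [ContinuousMultilinearMap.norm_mkPiAlgebraFin, mul_one]

lemma ofScalars_coeff' (s : ℕ → ℂ) (n : ℕ) :
    (FormalMultilinearSeries.ofScalars ℂ s).coeff n = s n := by
  rw [FormalMultilinearSeries.coeff]
  show FormalMultilinearSeries.ofScalars ℂ s n (fun _ => 1) = s n
  rw [FormalMultilinearSeries.ofScalars_apply_eq]
  simp

lemma hasFPowerSeriesAt_of_hasSum {s : ℕ → ℂ} {F : ℂ → ℂ}
    (h : ∀ z : ℂ, ‖z‖ < 1 → HasSum (fun m => s m * z ^ m) (F z)) :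
    HasFPowerSeriesAt F (FormalMultilinearSeries.ofScalars ℂ s) 0 := by
  have hhalf : ‖((2 : ℂ))⁻¹‖ < 1 := by
    rw [norm_inv]
    norm_num
  have hsum := (h _ hhalf).summable
  have htend : Filter.Tendsto (fun n => ‖s n * ((2 : ℂ))⁻¹ ^ n‖) Filter.atTop (nhds 0) := by
    simpa using hsum.tendsto_atTop_zero.norm
  have htend2 : Filter.Tendsto
      (fun n => ‖FormalMultilinearSeries.ofScalars ℂ s n‖ * ((((2 : ℝ≥0))⁻¹ : ℝ)) ^ n)
      Filter.atTop (nhds 0) := by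
    apply squeeze_zero (fun n => by positivity) _ htend
    intro n
    rw [norm_mul, norm_pow, norm_inv]
    have h2 : ‖(2 : ℂ)‖ = ((2 : ℝ)) := by norm_num
    rw [h2]
    have h3 : ((((2 : ℝ≥0))⁻¹ : ℝ)) = (2 : ℝ)⁻¹ := by norm_num
    rw [h3]
    gcongr
    exact ofScalars_norm_le' s n
  have hr_le : ((((2 : ℝ≥0))⁻¹ : ℝ≥0) : ENNReal) ≤ (FormalMultilinearSeries.ofScalars ℂ s).radius :=
    FormalMultilinearSeries.le_radius_of_tendsto _ htend2
  refine ⟨((((2 : ℝ≥0))⁻¹ : ℝ≥0) : ENNReal), hr_le, by norm_num, ?_⟩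
  intro y hy
  rw [mem_emetric_ball_zero_iff] at hy
  have h1 : ‖y‖₊ < ((2 : ℝ≥0))⁻¹ := ENNReal.coe_lt_coe.mp hy
  have hy' : ‖y‖ < 1 := by
    have h2 : (‖y‖₊ : ℝ) < (((2 : ℝ≥0))⁻¹ : ℝ) := h1
    have h3 : ((((2 : ℝ≥0))⁻¹ : ℝ)) < 1 := by norm_num
    calc ‖y‖ = (‖y‖₊ : ℝ) := by simp
      _ < _ := h2
      _ < 1 := h3
  rw [zero_add]
  refine ((h y hy').congr_fun fun n => ?_)
  show FormalMultilinearSeries.ofScalars ℂ s n (fun _ => y) = s n * y ^ n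
  rw [FormalMultilinearSeries.ofScalars_apply_eq, smul_eq_mul]

lemma coeff_unique {s t : ℕ → ℂ} {F : ℂ → ℂ}
    (hs : ∀ z : ℂ, ‖z‖ < 1 → HasSum (fun m => s m * z ^ m) (F z))
    (ht : ∀ z : ℂ, ‖z‖ < 1 → HasSum (fun m => t m * z ^ m) (F z)) : s = t := by
  have h := (hasFPowerSeriesAt_of_hasSum hs).eq_formalMultilinearSeries
    (hasFPowerSeriesAt_of_hasSum ht)
  funext n
  have h2 := congrArg (fun P => FormalMultilinearSeries.coeff P n) h
  simpa [ofScalars_coeff'] using h2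

lemma conv_of_hasSum {c a : ℕ → ℂ} {p : ℕ} {F : ℂ → ℂ}
    (hc0 : ∀ k, p < k → c k = 0)
    (hF : ∀ z : ℂ, ‖z‖ < 1 → HasSum (fun n => a n * z ^ n) (F z))
    (hG : ∀ z : ℂ, ‖z‖ < 1 → (∑ k ∈ Finset.range (p + 1), c k * z ^ k) * F z = 1) :
    ∀ m, ∑ ij ∈ Finset.HasAntidiagonal.antidiagonal m, c ij.1 * a ij.2 = if m = 0 then 1 else 0 := by
  have hb : ∀ z : ℂ, ‖z‖ < 1 →
      HasSum (fun m => (∑ ij ∈ Finset.HasAntidiagonal.antidiagonal m, c ij.1 * a ij.2) * z ^ m)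
        ((fun _ => (1 : ℂ)) z) := by
    intro z hz
    have hK : ∀ k ∈ Finset.range (p + 1),
        HasSum (fun m => (if k ≤ m then c k * a (m - k) * z ^ m else 0))
          (c k * z ^ k * F z) := by
      intro k _
      have h1 : HasSum (fun n => c k * z ^ k * (a n * z ^ n)) (c k * z ^ k * F z) :=
        (hF z hz).mul_left _
      have h2 : (fun m => (if k ≤ m then c k * a (m - k) * z ^ m else 0)) ∘ (fun n => n + k)
          = fun n => c k * z ^ k * (a n * z ^ n) := by
        funext n
        simp only [Function.comp_apply]
        rw [if_pos (Nat.le_add_left k n), Nat.add_sub_cancel, pow_add]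
        ring
      refine (Function.Injective.hasSum_iff (g := fun n : ℕ => n + k)
        (add_left_injective k) ?_).mp
        (by rw [h2]; exact h1)
      intro m hm
      rw [if_neg]
      intro hle
      exact hm ⟨m - k, by dsimp only; omega⟩
    have htot := hasSum_sum hK
    have harr : ∑ k ∈ Finset.range (p + 1), c k * z ^ k * F z = 1 := by
      rw [← Finset.sum_mul]
      exact hG z hz
    rw [harr] at htot
    refine htot.congr_fun fun m => ?_
    rw [← sum_range_ite_eq_antidiagonal (G := a) hc0, Finset.sum_mul]
    refine Finset.sum_congr rfl fun k _ => ?_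
    rw [ite_mul, zero_mul]
  have ht : ∀ z : ℂ, ‖z‖ < 1 →
      HasSum (fun m => (if m = 0 then (1 : ℂ) else 0) * z ^ m) ((fun _ => (1 : ℂ)) z) := by
    intro z _
    have := hasSum_single (f := fun m => (if m = 0 then (1 : ℂ) else 0) * z ^ m) 0
      (fun b hb => by simp [hb])
    simpa using this
  have := coeff_unique hb ht
  exact fun m => congrFun this m

lemma sum_arCoeffC (p : ℕ) (v : Fin p → ℝ) (z : ℂ) :
    ∑ k ∈ Finset.range (p + 1), arCoeffC p v k * z ^ k = arEval p v z := by
  have hterm : ∀ k : ℕ, arCoeffC p v k * z ^ k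
      = (if k = 0 then 1 else 0) * z ^ k
        - ∑ j : Fin p, (if k = (j : ℕ) + 1 then (v j : ℂ) * z ^ k else 0) := by
    intro k
    rw [arCoeffC, coeff_arSeriesR]
    push_cast [apply_ite]
    rw [sub_mul, Finset.sum_mul]
    congr 1
    refine Finset.sum_congr rfl fun j _ => ?_
    rw [ite_mul, zero_mul]
  simp only [hterm]
  rw [Finset.sum_sub_distrib]
  congr 1
  · rw [Finset.sum_eq_single 0]
    · simp
    · intro b _ hb
      rw [if_neg hb, zero_mul]
    · intro h
      exact absurd (Finset.mem_range.mpr (by omega)) h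
  · rw [Finset.sum_comm]
    refine Finset.sum_congr rfl fun j _ => ?_
    rw [Finset.sum_ite_eq' (Finset.range (p + 1)) ((j : ℕ) + 1) (fun k => (v j : ℂ) * z ^ k)]
    rw [if_pos (Finset.mem_range.mpr (by omega))]

theorem statement0 (p : ℕ) (hp : 1 ≤ p) (φ0 : Fin p → ℝ)
    (h0 : ∀ z : ℂ, ‖z‖ ≤ 1 → arEval p φ0 z ≠ 0) :
    ∃ ε > (0 : ℝ), ∃ c ∈ Set.Ioo (0 : ℝ) 1, ∃ K > (0 : ℝ),
      ∀ v : Fin p → ℝ, (∀ j, |v j - φ0 j| ≤ ε) →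
        (∀ z : ℂ, ‖z‖ ≤ 1 → arEval p v z ≠ 0) ∧
        (∀ z : ℂ, ‖z‖ ≤ 1 →
          HasSum (fun ℓ : ℕ => (arPiCoeff p v ℓ : ℂ) * z ^ ℓ) (arEval p v z)⁻¹) ∧
        (∀ j : ℕ, |arPiCoeff p v j| ≤ K * c ^ j) := by
  classical
  have hcont : ∀ v : Fin p → ℝ, Continuous (arEval p v) := fun v =>
    continuous_const.sub
      (continuous_finset_sum _ fun j _ => continuous_const.mul (continuous_pow _))
  -- Step 1 : a radius `r ∈ (1, 2]` on whose closed ball `arEval p φ0` does not vanish.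
  obtain ⟨r, hr1, hr2, hroot⟩ : ∃ r : ℝ, 1 < r ∧ r ≤ 2 ∧
      ∀ z : ℂ, ‖z‖ ≤ r → arEval p φ0 z ≠ 0 := by
    have hZc : IsCompact (Metric.closedBall (0 : ℂ) 2 ∩ arEval p φ0 ⁻¹' {0}) :=
      (isCompact_closedBall _ _).inter_right ((isClosed_singleton).preimage (hcont φ0))
    rcases (Metric.closedBall (0 : ℂ) 2 ∩ arEval p φ0 ⁻¹' {0}).eq_empty_or_nonempty with
      hne | hne
    · refine ⟨2, one_lt_two, le_rfl, fun z hz hzero => ?_⟩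
      have hzZ : z ∈ Metric.closedBall (0 : ℂ) 2 ∩ arEval p φ0 ⁻¹' {0} :=
        ⟨by simpa [Complex.dist_eq] using hz, by simp [hzero]⟩
      rw [hne] at hzZ
      exact hzZ
    · obtain ⟨z₀, hz₀, hmin⟩ := hZc.exists_isMinOn hne continuous_norm.continuousOn
      have hz₀0 : arEval p φ0 z₀ = 0 := hz₀.2
      have hm : 1 < ‖z₀‖ := by
        by_contra hle
        push_neg at hle
        exact h0 z₀ hle hz₀0
      refine ⟨min ((1 + ‖z₀‖) / 2) 2, lt_min (by linarith) one_lt_two,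
        min_le_right _ _, ?_⟩
      intro z hz hzero
      have hz2 : ‖z‖ ≤ 2 := hz.trans (min_le_right _ _)
      have hzZ : z ∈ Metric.closedBall (0 : ℂ) 2 ∩ arEval p φ0 ⁻¹' {0} :=
        ⟨by simpa [Complex.dist_eq] using hz2, by simp [hzero]⟩
      have h1 := isMinOn_iff.mp hmin z hzZ
      have h2 := hz.trans (min_le_left _ _)
      linarith
  -- Step 2 : the minimum `δ` of `|arEval p φ0|` on the closed ball of radius `r`.
  obtain ⟨z₁, hz₁, hδmin⟩ := (isCompact_closedBall (0 : ℂ) r).exists_isMinOn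
    ⟨0, Metric.mem_closedBall_self (by linarith)⟩
    ((continuous_norm.comp (hcont φ0)).continuousOn)
  set δ := ‖arEval p φ0 z₁‖ with hδdef
  have hδpos : 0 < δ := by
    refine norm_pos_iff.mpr (hroot z₁ ?_)
    have := Metric.mem_closedBall.mp hz₁
    rwa [Complex.dist_eq, sub_zero] at this
  have hδle : ∀ z : ℂ, ‖z‖ ≤ r → δ ≤ ‖arEval p φ0 z‖ := by
    intro z hz
    exact isMinOn_iff.mp hδmin z (by rw [Metric.mem_closedBall, Complex.dist_eq, sub_zero]; exact hz)
  -- Step 3 : the perturbation size `ε`.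
  have hp' : (0 : ℝ) < (p : ℝ) := by exact_mod_cast hp
  set ε := δ / (2 * (p : ℝ) * 2 ^ p) with hεdef
  have hεpos : 0 < ε :=
    div_pos hδpos (mul_pos (mul_pos two_pos hp') (pow_pos two_pos p))
  -- Step 4 : the uniform lower bound for perturbed polynomials on the ball of radius `r`.
  have hlow : ∀ v : Fin p → ℝ, (∀ j, |v j - φ0 j| ≤ ε) →
      ∀ z : ℂ, ‖z‖ ≤ r → δ / 2 ≤ ‖arEval p v z‖ := by
    intro v hv z hz
    have hdiff : arEval p φ0 z - arEval p v z
        = ∑ j : Fin p, ((v j - φ0 j : ℝ) : ℂ) * z ^ ((j : ℕ) + 1) := by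
      rw [arEval, arEval,
        show ∀ A B : ℂ, (1 - A) - (1 - B) = B - A from fun A B => by ring,
        ← Finset.sum_sub_distrib]
      refine Finset.sum_congr rfl fun j _ => ?_
      push_cast
      ring
    have hbound : ‖arEval p φ0 z - arEval p v z‖ ≤ δ / 2 := by
      rw [hdiff]
      calc ‖∑ j : Fin p, ((v j - φ0 j : ℝ) : ℂ) * z ^ ((j : ℕ) + 1)‖
          ≤ ∑ j : Fin p, ‖((v j - φ0 j : ℝ) : ℂ) * z ^ ((j : ℕ) + 1)‖ :=
            norm_sum_le _ _
        _ ≤ ∑ _j : Fin p, ε * 2 ^ p := by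
            refine Finset.sum_le_sum fun j _ => ?_
            rw [norm_mul, norm_pow]
            have h1 : ‖((v j - φ0 j : ℝ) : ℂ)‖ ≤ ε := by
              rw [Complex.norm_real, Real.norm_eq_abs]
              exact hv j
            have h2 : ‖z‖ ^ ((j : ℕ) + 1) ≤ 2 ^ p := by
              calc ‖z‖ ^ ((j : ℕ) + 1) ≤ 2 ^ ((j : ℕ) + 1) :=
                    pow_le_pow_left₀ (norm_nonneg z) (by linarith) _
                _ ≤ 2 ^ p := pow_le_pow_right₀ one_le_two j.isLt
            exact mul_le_mul h1 h2 (by positivity) hεpos.le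
        _ = (p : ℝ) * ε * 2 ^ p := by
            rw [Finset.sum_const, Finset.card_univ, Fintype.card_fin]
            push_cast
            ring
        _ ≤ δ / 2 := by
            refine le_of_eq ?_
            rw [hεdef]
            field_simp
    have h1 : δ ≤ ‖arEval p φ0 z‖ := hδle z hz
    have h3 : ‖arEval p φ0 z‖
        ≤ ‖arEval p φ0 z - arEval p v z‖ + ‖arEval p v z‖ := by
      calc ‖arEval p φ0 z‖
          = ‖(arEval p φ0 z - arEval p v z) + arEval p v z‖ := by
            congr 1
            ring
        _ ≤ _ := norm_add_le _ _
    linarith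
  -- The final data.
  refine ⟨ε, hεpos, r⁻¹, ⟨inv_pos.mpr (by linarith), inv_lt_one_of_one_lt₀ hr1⟩, 2 / δ,
    by positivity, ?_⟩
  intro v hv
  have hne : ∀ z : ℂ, ‖z‖ ≤ r → arEval p v z ≠ 0 := by
    intro z hz h
    have := hlow v hv z hz
    rw [h] at this
    simp only [norm_zero] at this
    linarith
  have hne1 : ∀ z : ℂ, ‖z‖ ≤ 1 → arEval p v z ≠ 0 :=
    fun z hz => hne z (hz.trans (by linarith))
  -- the reciprocal function
  set f : ℂ → ℂ := fun z => (arEval p v z)⁻¹ with hfdef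
  have hdAR : Differentiable ℂ (arEval p v) := by
    have hsum : Differentiable ℂ (fun z : ℂ => ∑ j : Fin p, (v j : ℂ) * z ^ ((j : ℕ) + 1)) :=
      Differentiable.fun_sum fun j _ => (differentiable_const _).mul (differentiable_pow _)
    exact (differentiable_const _).sub hsum
  set R : ℝ≥0 := ⟨r, by linarith⟩ with hRdef
  have hRr : (R : ℝ) = r := rfl
  have hfd : DifferentiableOn ℂ f (Metric.closedBall 0 (R : ℝ)) := by
    refine DifferentiableOn.inv hdAR.differentiableOn ?_
    intro x hx
    refine hne x ?_
    have := Metric.mem_closedBall.mp hx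
    rwa [Complex.dist_eq, sub_zero, hRr] at this
  have hq : HasFPowerSeriesOnBall f (cauchyPowerSeries f 0 (R : ℝ)) 0 R :=
    hfd.hasFPowerSeriesOnBall (by rw [← NNReal.coe_pos, hRr]; linarith)
  set a : ℕ → ℂ := fun n => (cauchyPowerSeries f 0 (R : ℝ)).coeff n with hadef
  have hsum_a : ∀ z : ℂ, ‖z‖ < r → HasSum (fun n => a n * z ^ n) (f z) := by
    intro z hz
    have hz' : z ∈ EMetric.ball (0 : ℂ) R := by
      show z ∈ Metric.eball (0 : ℂ) R
      rw [mem_eball_zero_iff]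
      exact_mod_cast (show ‖z‖₊ < R by rw [← NNReal.coe_lt_coe, hRr]; exact hz)
    have h1 := hq.hasSum hz'
    rw [zero_add] at h1
    refine h1.congr_fun fun n => ?_
    rw [FormalMultilinearSeries.apply_eq_pow_smul_coeff, smul_eq_mul]
    exact mul_comm _ _
  have hsum_a1 : ∀ z : ℂ, ‖z‖ < 1 → HasSum (fun n => a n * z ^ n) (f z) :=
    fun z hz => hsum_a z (hz.trans hr1)
  have hG : ∀ z : ℂ, ‖z‖ < 1 →
      (∑ k ∈ Finset.range (p + 1), arCoeffC p v k * z ^ k) * f z = 1 := by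
    intro z hz
    rw [sum_arCoeffC p v z]
    exact mul_inv_cancel₀ (hne1 z (le_of_lt hz))
  have ha_conv := conv_of_hasSum (fun k hk => arCoeffC_eq_zero p v k hk) hsum_a1 hG
  have hax : (fun m => ((arPiCoeff p v m : ℝ) : ℂ)) = a :=
    conv_unique (arCoeffC_zero p v) (pi_conv_C p v) ha_conv
  refine ⟨hne1, ?_, ?_⟩
  · -- the HasSum statement
    intro z hz
    have hz' : ‖z‖ < r := by linarith
    refine (hsum_a z hz').congr_fun fun n => ?_
    have h2 := congrFun hax n
    rw [h2]
  · -- the coefficient bound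
    intro j
    have hja : ((arPiCoeff p v j : ℝ) : ℂ) = a j := by
      have h2 := congrFun hax j
      simpa using h2
    have hnormaj : ‖a j‖ = |arPiCoeff p v j| := by
      rw [← hja, Complex.norm_real, Real.norm_eq_abs]
    have hMθ : ∀ θ : ℝ, ‖f (circleMap 0 (R : ℝ) θ)‖ ≤ 2 / δ := by
      intro θ
      have habsc : ‖circleMap 0 (R : ℝ) θ‖ ≤ r := by
        rw [hRr, norm_circleMap_zero, abs_of_pos (by linarith)]
      have h1 := hlow v hv _ habsc
      calc ‖f (circleMap 0 (R : ℝ) θ)‖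
          = (‖arEval p v (circleMap 0 (R : ℝ) θ)‖)⁻¹ := by
            rw [hfdef]
            simp only
            rw [norm_inv]
        _ ≤ (δ / 2)⁻¹ := inv_anti₀ (by linarith) h1
        _ = 2 / δ := by rw [inv_div]
    have hIcont : Continuous fun θ : ℝ => ‖f (circleMap 0 (R : ℝ) θ)‖ := by
      refine Continuous.norm ?_
      show Continuous fun θ : ℝ => (arEval p v (circleMap 0 (R : ℝ) θ))⁻¹
      refine Continuous.inv₀ ((hcont v).comp (continuous_circleMap 0 (R : ℝ))) ?_
      intro θ
      refine hne _ ?_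
      rw [hRr, norm_circleMap_zero, abs_of_pos (by linarith)]
    have hInt : ∫ θ : ℝ in (0)..2 * Real.pi, ‖f (circleMap 0 (R : ℝ) θ)‖
        ≤ 2 * Real.pi * (2 / δ) := by
      have h2 := intervalIntegral.integral_mono_on (μ := MeasureTheory.volume) (a := 0) (b := 2 * Real.pi)
        (by positivity) (hIcont.intervalIntegrable _ _) intervalIntegrable_const
        (fun θ _ => hMθ θ)
      rwa [intervalIntegral.integral_const, smul_eq_mul, sub_zero] at h2
    have hcb := norm_cauchyPowerSeries_le f 0 (R : ℝ) j
    have h1 : ‖a j‖ ≤ ((2 * Real.pi)⁻¹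
        * ∫ θ : ℝ in (0)..2 * Real.pi, ‖f (circleMap 0 (R : ℝ) θ)‖) * |(R : ℝ)|⁻¹ ^ j := by
      rw [hadef]
      simp only
      rw [← FormalMultilinearSeries.norm_apply_eq_norm_coef]
      exact hcb
    have hA : (2 * Real.pi)⁻¹
        * ∫ θ : ℝ in (0)..2 * Real.pi, ‖f (circleMap 0 (R : ℝ) θ)‖ ≤ 2 / δ := by
      calc (2 * Real.pi)⁻¹ * ∫ θ : ℝ in (0)..2 * Real.pi, ‖f (circleMap 0 (R : ℝ) θ)‖
          ≤ (2 * Real.pi)⁻¹ * (2 * Real.pi * (2 / δ)) := by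
            refine mul_le_mul_of_nonneg_left hInt ?_
            positivity
        _ = 2 / δ := by
            rw [← mul_assoc, inv_mul_cancel₀ (by positivity), one_mul]
    have hBr : |(R : ℝ)|⁻¹ = r⁻¹ := by rw [hRr, abs_of_pos (by linarith)]
    calc |arPiCoeff p v j| = ‖a j‖ := hnormaj.symm
      _ ≤ ((2 * Real.pi)⁻¹
          * ∫ θ : ℝ in (0)..2 * Real.pi, ‖f (circleMap 0 (R : ℝ) θ)‖) * |(R : ℝ)|⁻¹ ^ j := h1
      _ ≤ (2 / δ) * r⁻¹ ^ j := by
          rw [hBr]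
          exact mul_le_mul_of_nonneg_right hA
            (pow_nonneg (inv_nonneg.mpr (by linarith)) j)
end

section
/- Let q ≥ 1 and let θ₀ ∈ ℝ^q be such that the polynomial θ₀(z) = 1 + θ₀,₁ z + ⋯ + θ₀,q z^q has no zeros in the closed complex unit disk. Then there exist ε > 0, c ∈ (0,1) and K > 0 such that for all u₁, u₂ ∈ ℝ^q with max_j |u₁,ⱼ − θ₀,ⱼ| ≤ ε and max_j |u₂,ⱼ − θ₀,ⱼ| ≤ ε, and all j ≥ 1, the Taylor coefficients of the reciprocals satisfy |ψ_j(u₁) − ψ_j(u₂)| ≤ K · (max_k |u₁,k − u₂,k|) · j c^{j−1}. -/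
open scoped BigOperators

/-- The moving-average polynomial `θ_u(z) = 1 + u₁ z + ⋯ + u_q z^q`, evaluated at `z ∈ ℂ`. -/
noncomputable def maEval (q : ℕ) (u : Fin q → ℝ) (z : ℂ) : ℂ :=
  1 + ∑ j : Fin q, (u j : ℂ) * z ^ ((j : ℕ) + 1)

/-- The coefficients `ψ_ℓ(u)` of the power-series expansion of the reciprocal `1/θ_u(z)`
at `z = 0` (the Taylor coefficients, realized as the coefficients of the formal
multiplicative inverse, which is legitimate since `θ_u(0) = 1 ≠ 0`). -/
noncomputable def maPsiCoeff (q : ℕ) (u : Fin q → ℝ) (ℓ : ℕ) : ℝ :=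
  PowerSeries.coeff (R := ℝ) ℓ
    ((1 + ∑ j : Fin q, PowerSeries.monomial (R := ℝ) ((j : ℕ) + 1) (u j))⁻¹)

namespace MAAux

open PowerSeries Finset

variable {q : ℕ}

noncomputable def P (q : ℕ) (u : Fin q → ℝ) : PowerSeries ℝ :=
  1 + ∑ j : Fin q, PowerSeries.monomial (R := ℝ) ((j : ℕ) + 1) (u j)

lemma maPsi_eq (u : Fin q → ℝ) (n : ℕ) :
    maPsiCoeff q u n = PowerSeries.coeff (R := ℝ) n (P q u)⁻¹ := rfl

noncomputable def cc (q : ℕ) (u : Fin q → ℝ) (n : ℕ) : ℝ :=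
  if h : 1 ≤ n ∧ n ≤ q then u ⟨n - 1, by omega⟩ else if n = 0 then 1 else 0

lemma cc_zero (u : Fin q → ℝ) : cc q u 0 = 1 := by simp [cc]

lemma cc_of_gt (u : Fin q → ℝ) {n : ℕ} (h : q < n) : cc q u n = 0 := by
  rw [cc, dif_neg (by omega), if_neg (by omega)]

lemma cc_succ (u : Fin q → ℝ) (j : Fin q) : cc q u ((j : ℕ) + 1) = u j := by
  have h : (j : ℕ) + 1 ≤ q := j.2
  rw [cc, dif_pos ⟨by omega, h⟩]
  exact congrArg u (Fin.ext (by simp))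

lemma coeff_P (u : Fin q → ℝ) (n : ℕ) : PowerSeries.coeff (R := ℝ) n (P q u) = cc q u n := by
  simp only [P, map_add, map_sum, PowerSeries.coeff_one, PowerSeries.coeff_monomial]
  rcases eq_or_ne n 0 with rfl | hn
  · have : ∀ j : Fin q, (if (0:ℕ) = (j:ℕ)+1 then u j else 0) = 0 := by
      intro j; simp
    simp [cc]
  · simp only [hn, if_false, zero_add]
    by_cases h : n ≤ q
    · have hq0 : 0 < q := by omega
      rw [Finset.sum_eq_single (⟨n - 1, by omega⟩ : Fin q)]
      · simp only [Fin.val_mk]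
        rw [if_pos (by omega : n = n - 1 + 1), cc, dif_pos ⟨by omega, h⟩]
      · intro b _ hb
        have : n ≠ (b : ℕ) + 1 := by
          intro hcc
          apply hb
          apply Fin.ext
          simp [hcc]
        simp [this]
      · intro hmem; exact absurd (Finset.mem_univ _) hmem
    · have : ∀ j : Fin q, (if n = (j:ℕ)+1 then u j else 0) = 0 := by
        intro j
        have : n ≠ (j : ℕ) + 1 := by have := j.2; omega
        simp [this]
      simp [cc, hn, h, Finset.sum_congr rfl (fun j _ => this j)]

lemma constCoeff_P (u : Fin q → ℝ) : PowerSeries.constantCoeff (R := ℝ) (P q u) ≠ 0 := by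
  have := coeff_P u 0
  rw [PowerSeries.coeff_zero_eq_constantCoeff] at this
  rw [this, cc_zero]; norm_num

lemma conv (u : Fin q → ℝ) (n : ℕ) :
    ∑ p ∈ Finset.HasAntidiagonal.antidiagonal n, cc q u p.1 * maPsiCoeff q u p.2
      = if n = 0 then 1 else 0 := by
  have h1 : P q u * (P q u)⁻¹ = 1 := PowerSeries.mul_inv_cancel _ (constCoeff_P u)
  have h2 := congrArg (PowerSeries.coeff (R := ℝ) n) h1
  rw [PowerSeries.coeff_mul, PowerSeries.coeff_one] at h2
  rw [← h2]
  exact Finset.sum_congr rfl fun p _ => by rw [coeff_P, maPsi_eq]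

lemma psi_zero (u : Fin q → ℝ) : maPsiCoeff q u 0 = 1 := by
  have := conv u 0
  simpa [cc_zero] using this

lemma psi_rec (u : Fin q → ℝ) {n : ℕ} (hn : 1 ≤ n) :
    maPsiCoeff q u n = -∑ k ∈ Finset.range n, cc q u (k+1) * maPsiCoeff q u (n-1-k) := by
  have h := conv u n
  rw [Finset.Nat.sum_antidiagonal_eq_sum_range_succ_mk, Finset.sum_range_succ'] at h
  simp only [cc_zero, one_mul, Nat.sub_zero, if_neg (by omega : n ≠ 0)] at h
  have : ∀ k ∈ Finset.range n, cc q u (k+1) * maPsiCoeff q u (n - (k+1))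
      = cc q u (k+1) * maPsiCoeff q u (n-1-k) := by
    intro k _; congr 2; omega
  rw [Finset.sum_congr rfl this] at h
  linarith

/-- sum of |cc (k+1)| over any range is at most `∑ |u j|`. -/
lemma sum_cc_le (u : Fin q → ℝ) (n : ℕ) :
    ∑ k ∈ Finset.range n, |cc q u (k+1)| ≤ ∑ j : Fin q, |u j| := by
  have key : ∀ m : ℕ, q ≤ m → ∑ k ∈ Finset.range m, |cc q u (k+1)| = ∑ j : Fin q, |u j| := by
    intro m hm
    rw [← Finset.sum_subset (Finset.range_subset_range.2 hm)
      (fun k _ hk => by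
        rw [cc_of_gt u (by simp at hk ⊢; omega), abs_zero])]
    rw [← Fin.sum_univ_eq_sum_range (fun k => |cc q u (k+1)|) q]
    exact Finset.sum_congr rfl fun j _ => by rw [cc_succ]
  rcases le_total q n with h | h
  · rw [key n h]
  · calc ∑ k ∈ Finset.range n, |cc q u (k+1)|
        ≤ ∑ k ∈ Finset.range q, |cc q u (k+1)| :=
          Finset.sum_le_sum_of_subset_of_nonneg (Finset.range_subset_range.2 h)
            (fun _ _ _ => abs_nonneg _)
      _ = ∑ j : Fin q, |u j| := key q le_rfl

lemma psi_crude (u : Fin q → ℝ) (n : ℕ) :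
    |maPsiCoeff q u n| ≤ (1 + ∑ j : Fin q, |u j|) ^ n := by
  set A := ∑ j : Fin q, |u j| with hA
  have hA0 : 0 ≤ A := Finset.sum_nonneg fun _ _ => abs_nonneg _
  have hB1 : 1 ≤ 1 + A := by linarith
  induction n using Nat.strong_induction_on with
  | _ n ih =>
    rcases Nat.eq_zero_or_pos n with rfl | hn
    · simp [psi_zero]
    · rw [psi_rec u hn, abs_neg]
      calc |∑ k ∈ Finset.range n, cc q u (k+1) * maPsiCoeff q u (n-1-k)|
          ≤ ∑ k ∈ Finset.range n, |cc q u (k+1)| * |maPsiCoeff q u (n-1-k)| := by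
            refine (Finset.abs_sum_le_sum_abs _ _).trans_eq ?_
            exact Finset.sum_congr rfl fun k _ => abs_mul _ _
        _ ≤ ∑ k ∈ Finset.range n, |cc q u (k+1)| * (1+A)^(n-1) := by
            refine Finset.sum_le_sum fun k hk => ?_
            refine mul_le_mul_of_nonneg_left ?_ (abs_nonneg _)
            refine (ih (n-1-k) (by omega)).trans ?_
            exact pow_le_pow_right₀ hB1 (by omega)
        _ = (∑ k ∈ Finset.range n, |cc q u (k+1)|) * (1+A)^(n-1) := by
            rw [Finset.sum_mul]
        _ ≤ A * (1+A)^(n-1) :=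
            mul_le_mul_of_nonneg_right (sum_cc_le u n) (by positivity)
        _ ≤ (1+A) * (1+A)^(n-1) :=
            mul_le_mul_of_nonneg_right (by linarith) (by positivity)
        _ = (1+A)^n := by
            rw [← pow_succ']
            congr 1
            omega

lemma maEval_diff (u : Fin q → ℝ) : Differentiable ℂ (maEval q u) := by
  unfold maEval
  refine (differentiable_const (1:ℂ)).add ?_
  refine Differentiable.fun_sum fun j _ => ?_
  exact (differentiable_const _).mul (differentiable_pow _)

lemma maEval_eq_sum (u : Fin q → ℝ) (z : ℂ) :
    maEval q u z = ∑ j ∈ Finset.range (q+1), ((cc q u j : ℝ) : ℂ) * z ^ j := by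
  rw [Finset.sum_range_succ']
  rw [cc_zero]
  simp only [pow_zero, Complex.ofReal_one, mul_one]
  unfold maEval
  rw [add_comm]
  congr 1
  rw [← Fin.sum_univ_eq_sum_range (fun i => ((cc q u (i+1) : ℝ) : ℂ) * z ^ (i+1)) q]
  exact Finset.sum_congr rfl fun j _ => by rw [cc_succ]

lemma maEval_sub (u v : Fin q → ℝ) (z : ℂ) :
    maEval q u z - maEval q v z
      = ∑ j : Fin q, ((u j - v j : ℝ) : ℂ) * z ^ ((j : ℕ) + 1) := by
  unfold maEval
  rw [add_sub_add_left_eq_sub, ← Finset.sum_sub_distrib]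
  refine Finset.sum_congr rfl fun j _ => ?_
  push_cast
  ring

lemma hasSum_psi (u : Fin q → ℝ) {y : ℂ}
    (hy : ‖y‖ < (2 * (1 + ∑ j : Fin q, |u j|))⁻¹) :
    HasSum (fun n => ((maPsiCoeff q u n : ℝ) : ℂ) * y ^ n) ((maEval q u y)⁻¹) := by
  set A := ∑ j : Fin q, |u j| with hA
  have hA0 : 0 ≤ A := Finset.sum_nonneg fun _ _ => abs_nonneg _
  have hB : (0:ℝ) < 1 + A := by linarith
  have hyB : (1 + A) * ‖y‖ < 1/2 := by
    have h2 : (0:ℝ) < 2 * (1 + A) := by linarith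
    calc (1 + A) * ‖y‖ < (1 + A) * (2 * (1 + A))⁻¹ :=
          mul_lt_mul_of_pos_left hy hB
      _ = 1/2 := by field_simp
  have hgeosum : Summable (fun n : ℕ => ((1 + A) * ‖y‖) ^ n) :=
    summable_geometric_of_lt_one (by positivity) (by linarith)
  have hfnorm : ∀ n : ℕ, ‖((maPsiCoeff q u n : ℝ) : ℂ) * y ^ n‖ ≤ ((1 + A) * ‖y‖) ^ n := by
    intro n
    rw [norm_mul, norm_pow, Complex.norm_real, Real.norm_eq_abs, mul_pow]
    exact mul_le_mul_of_nonneg_right (psi_crude u n) (by positivity)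
  have hf : Summable (fun n => ((maPsiCoeff q u n : ℝ) : ℂ) * y ^ n) :=
    Summable.of_norm_bounded hgeosum hfnorm
  set f : ℕ → ℂ := fun n => ((maPsiCoeff q u n : ℝ) : ℂ) * y ^ n with hfdef
  set S := ∑' n, f n with hS
  -- the shifted families
  set h : ℕ → ℕ → ℂ := fun j n =>
    if j ≤ n then ((cc q u j : ℝ) : ℂ) * ((maPsiCoeff q u (n - j) : ℝ) : ℂ) * y ^ n else 0
    with hhdef
  have hhsummable : ∀ j : ℕ, Summable (h j) := by
    intro j
    refine Summable.of_norm_bounded (g := fun n => |cc q u j| * ((1 + A) * ‖y‖) ^ n)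
      (hgeosum.mul_left _) ?_
    intro n
    by_cases hjn : j ≤ n
    · simp only [hhdef, if_pos hjn]
      rw [norm_mul, norm_mul, norm_pow, Complex.norm_real, Complex.norm_real,
        Real.norm_eq_abs, Real.norm_eq_abs, mul_pow]
      rw [mul_assoc]
      refine mul_le_mul_of_nonneg_left ?_ (abs_nonneg _)
      calc |maPsiCoeff q u (n - j)| * ‖y‖ ^ n ≤ (1 + A) ^ (n - j) * ‖y‖ ^ n :=
            mul_le_mul_of_nonneg_right (psi_crude u _) (by positivity)
        _ ≤ (1 + A) ^ n * ‖y‖ ^ n :=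
            mul_le_mul_of_nonneg_right
              (pow_le_pow_right₀ (by linarith) (Nat.sub_le _ _)) (by positivity)
    · simp only [hhdef, if_neg hjn, norm_zero]
      positivity
  have hprod : maEval q u y * S = 1 := by
    have step1 : maEval q u y * S = ∑ j ∈ Finset.range (q+1), ∑' n, h j n := by
      rw [maEval_eq_sum, Finset.sum_mul]
      refine Finset.sum_congr rfl fun j hj => ?_
      have e1 : ((cc q u j : ℝ) : ℂ) * y ^ j * S = ∑' ℓ, h j (ℓ + j) := by
        rw [hS, ← tsum_mul_left]
        refine tsum_congr fun ℓ => ?_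
        simp only [hhdef, hfdef, if_pos (Nat.le_add_left j ℓ), Nat.add_sub_cancel]
        rw [pow_add]
        ring
      rw [e1]
      have := Summable.sum_add_tsum_nat_add (f := h j) j (hhsummable j)
      have hzero : ∑ i ∈ Finset.range j, h j i = 0 := by
        refine Finset.sum_eq_zero fun i hi => ?_
        rw [Finset.mem_range] at hi
        simp only [hhdef, if_neg (by omega : ¬ j ≤ i)]
      rw [← this, hzero, zero_add]
    rw [step1, ← Summable.tsum_finsetSum (fun j _ => hhsummable j)]
    have step2 : ∀ n : ℕ, (∑ j ∈ Finset.range (q+1), h j n)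
        = (if n = 0 then (1:ℂ) else 0) * y ^ n := by
      intro n
      have lhs_eq : ∑ j ∈ Finset.range (q+1), h j n
          = ∑ j ∈ Finset.range (n+q+1), h j n := by
        apply Finset.sum_subset (Finset.range_subset_range.2 (show q+1 ≤ n+q+1 by omega))
        intro j hj hj'
        rw [Finset.mem_range] at hj hj'
        simp only [hhdef]
        rw [cc_of_gt u (show q < j by omega)]
        simp
      have mid_eq : ∑ j ∈ Finset.range (n+1), h j n
          = ∑ j ∈ Finset.range (n+q+1), h j n := by
        apply Finset.sum_subset (Finset.range_subset_range.2 (show n+1 ≤ n+q+1 by omega))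
        intro j hj hj'
        rw [Finset.mem_range] at hj hj'
        simp only [hhdef, if_neg (show ¬ j ≤ n by omega)]
      have main : ∑ j ∈ Finset.range (n+1), h j n
          = ((if n = 0 then (1:ℝ) else 0 : ℝ) : ℂ) * y ^ n := by
        rw [← conv u n, Finset.Nat.sum_antidiagonal_eq_sum_range_succ_mk,
          Complex.ofReal_sum, Finset.sum_mul]
        refine Finset.sum_congr rfl fun j hj => ?_
        rw [Finset.mem_range] at hj
        simp only [hhdef, if_pos (show j ≤ n by omega), Complex.ofReal_mul]
      rw [lhs_eq, ← mid_eq, main]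
      split_ifs <;> simp
    have e2 : ∑' (n:ℕ), ∑ j ∈ Finset.range (q+1), h j n
        = ∑' (n:ℕ), (if n = 0 then (1:ℂ) else 0) * y ^ n := tsum_congr step2
    rw [e2, tsum_eq_single 0 (fun b hb => by simp [hb])]
    simp
  have hne : maEval q u y ≠ 0 := left_ne_zero_of_mul_eq_one hprod
  have hSval : S = (maEval q u y)⁻¹ := by
    field_simp
    rw [mul_comm]
    exact hprod
  exact hSval ▸ hf.hasSum

lemma hasFPSA (u : Fin q → ℝ) :
    HasFPowerSeriesAt (fun z => (maEval q u z)⁻¹)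
      (FormalMultilinearSeries.ofScalars ℂ (fun n => ((maPsiCoeff q u n : ℝ) : ℂ))) 0 := by
  set A := ∑ j : Fin q, |u j| with hA
  have hA0 : 0 ≤ A := Finset.sum_nonneg fun _ _ => abs_nonneg _
  have hB : (0:ℝ) < 1 + A := by linarith
  set rr : ℝ := (2 * (1 + A))⁻¹ with hrrdef
  have hrr : 0 < rr := by positivity
  refine ⟨ENNReal.ofReal rr, ?_, ENNReal.ofReal_pos.2 hrr, ?_⟩
  · show ((Real.toNNReal rr : NNReal) : ENNReal) ≤ _
    refine FormalMultilinearSeries.le_radius_of_bound _ 1 fun n => ?_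
    rw [FormalMultilinearSeries.ofScalars_norm]
    rw [Complex.norm_real, Real.norm_eq_abs, Real.coe_toNNReal _ hrr.le]
    calc |maPsiCoeff q u n| * rr ^ n ≤ (1 + A) ^ n * rr ^ n :=
          mul_le_mul_of_nonneg_right (psi_crude u n) (by positivity)
      _ = ((1 + A) * rr) ^ n := (mul_pow _ _ _).symm
      _ ≤ 1 := by
          have h12 : (1 + A) * rr = 1/2 := by rw [hrrdef]; field_simp
          rw [h12]
          exact pow_le_one₀ (by norm_num) (by norm_num)
  · intro y hy
    rw [mem_emetric_ball_zero_iff, ← ofReal_norm] at hy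
    have hy' : ‖y‖ < rr := (ENNReal.ofReal_lt_ofReal_iff hrr).1 hy
    simp only [FormalMultilinearSeries.ofScalars_apply_eq, smul_eq_mul, zero_add]
    exact hasSum_psi u hy'


lemma psi_decay (q : ℕ) (hq : 1 ≤ q) (θ0 : Fin q → ℝ)
    (h0 : ∀ z : ℂ, ‖z‖ ≤ 1 → maEval q θ0 z ≠ 0) :
    ∃ ε > (0:ℝ), ∃ c ∈ Set.Ioo (0:ℝ) 1, ∃ M > (0:ℝ),
      ∀ u : Fin q → ℝ, (∀ j, |u j - θ0 j| ≤ ε) → ∀ n, |maPsiCoeff q u n| ≤ M * c ^ n := by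
  have hopen : IsOpen {z : ℂ | maEval q θ0 z ≠ 0} :=
    isOpen_compl_singleton.preimage (maEval_diff θ0).continuous
  have hsub : Metric.closedBall (0:ℂ) 1 ⊆ {z : ℂ | maEval q θ0 z ≠ 0} := by
    intro z hz
    exact h0 z (by simpa [Complex.dist_eq] using Metric.mem_closedBall.1 hz)
  obtain ⟨δ, hδ, hsubδ⟩ :=
    (isCompact_closedBall (0:ℂ) 1).exists_cthickening_subset_open hopen hsub
  set R : ℝ := δ + 1 with hRdef
  have hR1 : 1 < R := by simp only [hRdef]; linarith
  have hR0 : 0 < R := by linarith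
  have hzero : ∀ z : ℂ, ‖z‖ ≤ R → maEval q θ0 z ≠ 0 := by
    intro z hz
    apply hsubδ
    rw [cthickening_closedBall hδ.le zero_le_one]
    simpa [Complex.dist_eq] using hz
  obtain ⟨z0, hz0mem, hz0min'⟩ :=
    (isCompact_closedBall (0:ℂ) R).exists_isMinOn
      ⟨0, Metric.mem_closedBall_self hR0.le⟩
      ((continuous_norm.comp (maEval_diff θ0).continuous).continuousOn)
  have hz0min : ∀ z ∈ Metric.closedBall (0:ℂ) R,
      ‖maEval q θ0 z0‖ ≤ ‖maEval q θ0 z‖ :=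
    fun z hz => hz0min' hz
  set m : ℝ := ‖maEval q θ0 z0‖ with hmdef
  have hm : 0 < m :=
    norm_pos_iff.2 (hzero z0 (by simpa [Complex.dist_eq] using hz0mem))
  have hq' : (0:ℝ) < (q:ℝ) := by exact_mod_cast hq
  have hden : (0:ℝ) < 2 * (q:ℝ) * R ^ q :=
    mul_pos (mul_pos two_pos hq') (pow_pos hR0 q)
  set ε : ℝ := m / (2 * (q:ℝ) * R ^ q) with hεdef
  have hε : 0 < ε := div_pos hm hden
  have hpert : ∀ u : Fin q → ℝ, (∀ j, |u j - θ0 j| ≤ ε) → ∀ z : ℂ, ‖z‖ ≤ R →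
      m / 2 ≤ ‖maEval q u z‖ := by
    intro u hu z hz
    have hdiff : ‖maEval q u z - maEval q θ0 z‖ ≤ m / 2 := by
      rw [maEval_sub]
      calc ‖∑ j : Fin q, ((u j - θ0 j : ℝ):ℂ) * z ^ ((j:ℕ)+1)‖
          ≤ ∑ j : Fin q, ‖((u j - θ0 j : ℝ):ℂ) * z ^ ((j:ℕ)+1)‖ :=
            norm_sum_le _ _
        _ ≤ ∑ _j : Fin q, ε * R ^ q := by
            refine Finset.sum_le_sum fun j _ => ?_
            rw [norm_mul, norm_pow, Complex.norm_real, Real.norm_eq_abs]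
            have h2 : ‖z‖ ^ ((j:ℕ)+1) ≤ R ^ ((j:ℕ)+1) :=
              pow_le_pow_left₀ (norm_nonneg z) hz _
            have h3 : R ^ ((j:ℕ)+1) ≤ R ^ q := pow_le_pow_right₀ hR1.le j.2
            exact mul_le_mul (hu j) (h2.trans h3) (by positivity) hε.le
        _ = (q:ℝ) * (ε * R ^ q) := by
            rw [Finset.sum_const, Finset.card_univ, Fintype.card_fin, nsmul_eq_mul]
        _ = m/2 := by rw [hεdef]; field_simp
    have hm_le : m ≤ ‖maEval q θ0 z‖ :=
      hz0min z (by simpa [Complex.dist_eq] using hz)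
    have tri : ‖maEval q θ0 z‖ - ‖maEval q u z‖
        ≤ ‖maEval q u z - maEval q θ0 z‖ := by
      have h4 := abs_norm_sub_norm_le (maEval q θ0 z) (maEval q u z)
      have h5 := le_trans (le_abs_self _) h4
      rwa [norm_sub_rev] at h5
    linarith
  refine ⟨ε, hε, R⁻¹, ⟨inv_pos.2 hR0, inv_lt_one_of_one_lt₀ hR1⟩, 2/m, by positivity, ?_⟩
  intro u hu n
  set g : ℂ → ℂ := fun z => (maEval q u z)⁻¹ with hgdef
  have hne : ∀ z ∈ Metric.closedBall (0:ℂ) R, maEval q u z ≠ 0 := by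
    intro z hz
    have h6 := hpert u hu z (by simpa [Complex.dist_eq] using hz)
    intro hcon
    rw [hcon] at h6
    simp only [norm_zero] at h6
    linarith
  have hd : DifferentiableOn ℂ g (Metric.closedBall 0 R) :=
    ((maEval_diff u).differentiableOn).inv hne
  set R' : NNReal := ⟨R, hR0.le⟩ with hR'def
  have hR'pos : 0 < R' := by
    rw [← NNReal.coe_pos]
    exact hR0
  have hball : HasFPowerSeriesOnBall g (cauchyPowerSeries g 0 R') 0 R' :=
    DifferentiableOn.hasFPowerSeriesOnBall hd hR'pos
  have huniq := (hasFPSA u).eq_formalMultilinearSeries hball.hasFPowerSeriesAt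
  have hcoeff : ((maPsiCoeff q u n : ℝ) : ℂ)
      = cauchyPowerSeries g 0 R' n (fun _ => 1) := by
    have hn := congrFun huniq n
    have h1 : FormalMultilinearSeries.ofScalars ℂ
        (fun k => ((maPsiCoeff q u k : ℝ):ℂ)) n (fun _ => (1:ℂ))
        = ((maPsiCoeff q u n : ℝ):ℂ) := by
      rw [FormalMultilinearSeries.ofScalars_apply_eq]
      simp
    rw [← h1, hn]
  have hInt : (∫ θ in (0:ℝ)..2*Real.pi, ‖g (circleMap 0 R θ)‖) ≤ 2*Real.pi * (2/m) := by
    have hcont : Continuous fun θ : ℝ => ‖g (circleMap 0 R θ)‖ := by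
      refine Continuous.norm ?_
      refine Continuous.inv₀
        ((maEval_diff u).continuous.comp (continuous_circleMap _ _)) ?_
      intro θ
      apply hne
      simp [Metric.mem_closedBall, Complex.dist_eq, norm_circleMap_zero, abs_of_pos hR0]
    have hle : ∀ θ ∈ Set.Icc (0:ℝ) (2*Real.pi), ‖g (circleMap 0 R θ)‖ ≤ 2/m := by
      intro θ _
      have h5 := hpert u hu (circleMap 0 R θ)
        (by simp [norm_circleMap_zero, abs_of_pos hR0])
      have h6 : (0:ℝ) < m/2 := by linarith
      simp only [hgdef, norm_inv]
      calc (‖maEval q u (circleMap 0 R θ)‖)⁻¹ ≤ (m/2)⁻¹ :=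
            inv_anti₀ h6 h5
        _ = 2/m := by rw [inv_div]
    calc ∫ θ in (0:ℝ)..2*Real.pi, ‖g (circleMap 0 R θ)‖
        ≤ ∫ _θ in (0:ℝ)..2*Real.pi, (2/m) :=
          intervalIntegral.integral_mono_on Real.two_pi_pos.le
            (hcont.intervalIntegrable _ _) intervalIntegrable_const hle
      _ = 2*Real.pi * (2/m) := by simp; ring
  have hcb := norm_cauchyPowerSeries_le g 0 (R' : ℝ) n
  have h7 : |maPsiCoeff q u n| = ‖((maPsiCoeff q u n : ℝ):ℂ)‖ := by
    rw [Complex.norm_real, Real.norm_eq_abs]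
  rw [h7, hcoeff]
  have h8 : ‖cauchyPowerSeries g 0 (R':ℝ) n (fun _ => (1:ℂ))‖
      ≤ ‖cauchyPowerSeries g 0 (R':ℝ) n‖ := by
    have h9 := (cauchyPowerSeries g 0 (R':ℝ) n).le_opNorm (fun _ => (1:ℂ))
    simpa using h9
  refine h8.trans (hcb.trans ?_)
  have hRabs : |(R':ℝ)| = R := abs_of_pos hR0
  rw [hRabs]
  have h10 : (2*Real.pi)⁻¹ * (∫ θ in (0:ℝ)..2*Real.pi, ‖g (circleMap 0 (R':ℝ) θ)‖)
      ≤ 2/m := by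
    calc (2*Real.pi)⁻¹ * (∫ θ in (0:ℝ)..2*Real.pi, ‖g (circleMap 0 (R':ℝ) θ)‖)
        ≤ (2*Real.pi)⁻¹ * (2*Real.pi * (2/m)) :=
          mul_le_mul_of_nonneg_left hInt (by positivity)
      _ = 2/m := by
          field_simp
  exact mul_le_mul_of_nonneg_right h10 (by positivity)


lemma cc_eq_of (u : Fin q → ℝ) {b : ℕ} (hb : 1 ≤ b ∧ b ≤ q) :
    cc q u b = u ⟨b-1, by omega⟩ := by rw [cc, dif_pos hb]

end MAAux

theorem statement2 (q : ℕ) (hq : 1 ≤ q) (θ0 : Fin q → ℝ)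
    (h0 : ∀ z : ℂ, ‖z‖ ≤ 1 → maEval q θ0 z ≠ 0) :
    ∃ ε > (0 : ℝ), ∃ c ∈ Set.Ioo (0 : ℝ) 1, ∃ K > (0 : ℝ),
      ∀ u₁ u₂ : Fin q → ℝ,
        (∀ j, |u₁ j - θ0 j| ≤ ε) → (∀ j, |u₂ j - θ0 j| ≤ ε) →
          ∀ j : ℕ, 1 ≤ j →
            |maPsiCoeff q u₁ j - maPsiCoeff q u₂ j| ≤
              K * (⨆ k : Fin q, |u₁ k - u₂ k|) * j * c ^ (j - 1) := by
  obtain ⟨ε, hε, c, hc, M, hM, hbound⟩ := MAAux.psi_decay q hq θ0 h0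
  obtain ⟨hc0, hc1⟩ := hc
  have hq' : (0:ℝ) < (q:ℝ) := by exact_mod_cast hq
  have hK : (0:ℝ) < 2*(q:ℝ)*M^2*(c⁻¹)^(q-1) :=
    mul_pos (mul_pos (mul_pos two_pos hq') (pow_pos hM 2)) (pow_pos (inv_pos.2 hc0) _)
  refine ⟨ε, hε, c, ⟨hc0, hc1⟩, 2*(q:ℝ)*M^2*(c⁻¹)^(q-1), hK, ?_⟩
  intro u₁ u₂ hu₁ hu₂ j hj
  set δ := ⨆ k : Fin q, |u₁ k - u₂ k| with hδdef
  have hFin : Nonempty (Fin q) := ⟨⟨0, by omega⟩⟩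
  have hbdd : BddAbove (Set.range fun k : Fin q => |u₁ k - u₂ k|) :=
    (Set.finite_range _).bddAbove
  have hδle : ∀ k, |u₁ k - u₂ k| ≤ δ := fun k => le_ciSup hbdd k
  have hδ0 : 0 ≤ δ := le_trans (abs_nonneg _) (hδle ⟨0, by omega⟩)
  set P₁ := MAAux.P q u₁ with hP₁
  set P₂ := MAAux.P q u₂ with hP₂
  have h₁ : P₁⁻¹ * P₁ = 1 := PowerSeries.inv_mul_cancel _ (MAAux.constCoeff_P u₁)
  have h₂ : P₂ * P₂⁻¹ = 1 := PowerSeries.mul_inv_cancel _ (MAAux.constCoeff_P u₂)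
  have hid : P₁⁻¹ - P₂⁻¹ = P₁⁻¹ * ((P₂ - P₁) * P₂⁻¹) := by
    have e : P₁⁻¹ * ((P₂ - P₁) * P₂⁻¹) = P₁⁻¹ * (P₂ * P₂⁻¹) - (P₁⁻¹ * P₁) * P₂⁻¹ := by
      ring
    rw [e, h₁, h₂, mul_one, one_mul]
  have hcoeff : maPsiCoeff q u₁ j - maPsiCoeff q u₂ j
      = PowerSeries.coeff (R := ℝ) j (P₁⁻¹ * ((P₂ - P₁) * P₂⁻¹)) := by
    rw [← hid, map_sub, MAAux.maPsi_eq, MAAux.maPsi_eq]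
  have hd : ∀ b, |PowerSeries.coeff (R := ℝ) b (P₂ - P₁)| ≤ if 1 ≤ b ∧ b ≤ q then δ else 0 := by
    intro b
    rw [map_sub, MAAux.coeff_P, MAAux.coeff_P]
    by_cases hb : 1 ≤ b ∧ b ≤ q
    · rw [if_pos hb, MAAux.cc_eq_of u₂ hb, MAAux.cc_eq_of u₁ hb, abs_sub_comm]
      exact hδle _
    · rw [if_neg hb]
      rcases Nat.eq_zero_or_pos b with rfl | hbpos
      · rw [MAAux.cc_zero, MAAux.cc_zero]
        simp
      · have hbq : q < b := by omega
        rw [MAAux.cc_of_gt u₂ hbq, MAAux.cc_of_gt u₁ hbq]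
        simp
  set T := M^2 * δ * c^(j-1) * (c⁻¹)^(q-1) with hT
  have hT0 : 0 ≤ T := by positivity
  have count : ∀ p2 : ℕ,
      ∑ r ∈ Finset.HasAntidiagonal.antidiagonal p2, (if 1 ≤ r.1 ∧ r.1 ≤ q then T else 0) ≤ q * T := by
    intro p2
    rw [Finset.Nat.sum_antidiagonal_eq_sum_range_succ_mk]
    have e : ∀ k : ℕ, (if 1 ≤ k ∧ k ≤ q then T else 0)
        = if k ∈ Finset.Icc 1 q then T else 0 := by
      intro k; simp [Finset.mem_Icc]
    calc ∑ k ∈ Finset.range (p2+1), (if 1 ≤ k ∧ k ≤ q then T else 0)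
        = ∑ k ∈ Finset.range (p2+1) ∩ Finset.Icc 1 q, T := by
          rw [Finset.sum_congr rfl (fun k _ => e k), Finset.sum_ite_mem]
      _ = ((Finset.range (p2+1) ∩ Finset.Icc 1 q).card : ℝ) * T := by
          rw [Finset.sum_const, nsmul_eq_mul]
      _ ≤ (q:ℝ) * T := by
          refine mul_le_mul_of_nonneg_right ?_ hT0
          have hcard : (Finset.range (p2+1) ∩ Finset.Icc 1 q).card ≤ q := by
            refine le_trans (Finset.card_le_card Finset.inter_subset_right) ?_
            rw [Nat.card_Icc]
            omega
          exact_mod_cast hcard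
  have inner : ∀ p ∈ Finset.HasAntidiagonal.antidiagonal j,
      |PowerSeries.coeff (R := ℝ) p.1 P₁⁻¹| * |PowerSeries.coeff (R := ℝ) p.2 ((P₂ - P₁) * P₂⁻¹)|
        ≤ q * T := by
    intro p hp
    have hpsum : p.1 + p.2 = j := Finset.HasAntidiagonal.mem_antidiagonal.1 hp
    have step : |PowerSeries.coeff (R := ℝ) p.2 ((P₂ - P₁) * P₂⁻¹)|
        ≤ ∑ r ∈ Finset.HasAntidiagonal.antidiagonal p.2,
            |PowerSeries.coeff (R := ℝ) r.1 (P₂ - P₁)| * |PowerSeries.coeff (R := ℝ) r.2 P₂⁻¹| := by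
      rw [PowerSeries.coeff_mul]
      refine (Finset.abs_sum_le_sum_abs _ _).trans_eq ?_
      exact Finset.sum_congr rfl fun r _ => abs_mul _ _
    calc |PowerSeries.coeff (R := ℝ) p.1 P₁⁻¹| * |PowerSeries.coeff (R := ℝ) p.2 ((P₂ - P₁) * P₂⁻¹)|
        ≤ |PowerSeries.coeff (R := ℝ) p.1 P₁⁻¹| * ∑ r ∈ Finset.HasAntidiagonal.antidiagonal p.2,
            |PowerSeries.coeff (R := ℝ) r.1 (P₂ - P₁)| * |PowerSeries.coeff (R := ℝ) r.2 P₂⁻¹| :=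
          mul_le_mul_of_nonneg_left step (abs_nonneg _)
      _ = ∑ r ∈ Finset.HasAntidiagonal.antidiagonal p.2, |PowerSeries.coeff (R := ℝ) p.1 P₁⁻¹| *
            (|PowerSeries.coeff (R := ℝ) r.1 (P₂ - P₁)| * |PowerSeries.coeff (R := ℝ) r.2 P₂⁻¹|) := by
          rw [Finset.mul_sum]
      _ ≤ ∑ r ∈ Finset.HasAntidiagonal.antidiagonal p.2, (if 1 ≤ r.1 ∧ r.1 ≤ q then T else 0) := by
          refine Finset.sum_le_sum fun r hr => ?_
          have hrsum : r.1 + r.2 = p.2 := Finset.HasAntidiagonal.mem_antidiagonal.1 hr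
          by_cases hb : 1 ≤ r.1 ∧ r.1 ≤ q
          · rw [if_pos hb]
            have h1 : |PowerSeries.coeff (R := ℝ) p.1 P₁⁻¹| ≤ M * c ^ p.1 := by
              rw [← MAAux.maPsi_eq]; exact hbound u₁ hu₁ p.1
            have h2 : |PowerSeries.coeff (R := ℝ) r.2 P₂⁻¹| ≤ M * c ^ r.2 := by
              rw [← MAAux.maPsi_eq]; exact hbound u₂ hu₂ r.2
            have h3 : |PowerSeries.coeff (R := ℝ) r.1 (P₂ - P₁)| ≤ δ := by
              have := hd r.1; rwa [if_pos hb] at this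
            have hcq : (0:ℝ) < c^(q-1) := pow_pos hc0 _
            have hpow : c^(p.1+r.2) ≤ c^(j-1) * (c⁻¹)^(q-1) := by
              rw [inv_pow, ← div_eq_mul_inv, le_div_iff₀ hcq, ← pow_add]
              refine pow_le_pow_of_le_one hc0.le hc1.le ?_
              omega
            calc |PowerSeries.coeff (R := ℝ) p.1 P₁⁻¹| *
                  (|PowerSeries.coeff (R := ℝ) r.1 (P₂ - P₁)| * |PowerSeries.coeff (R := ℝ) r.2 P₂⁻¹|)
                ≤ (M * c ^ p.1) * (δ * (M * c ^ r.2)) := by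
                  refine mul_le_mul h1 (mul_le_mul h3 h2 (abs_nonneg _) hδ0)
                    (mul_nonneg (abs_nonneg _) (abs_nonneg _)) (by positivity)
              _ = M^2 * δ * c^(p.1+r.2) := by rw [pow_add]; ring
              _ ≤ M^2 * δ * (c^(j-1) * (c⁻¹)^(q-1)) :=
                  mul_le_mul_of_nonneg_left hpow (by positivity)
              _ = T := by rw [hT]; ring
          · rw [if_neg hb]
            have h3 : |PowerSeries.coeff (R := ℝ) r.1 (P₂ - P₁)| ≤ 0 := by
              have := hd r.1; rwa [if_neg hb] at this
            have h3' : PowerSeries.coeff (R := ℝ) r.1 (P₂ - P₁) = 0 :=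
              abs_nonpos_iff.1 h3
            rw [h3', abs_zero, zero_mul, mul_zero]
      _ ≤ q * T := count p.2
  rw [hcoeff, PowerSeries.coeff_mul]
  calc |∑ p ∈ Finset.HasAntidiagonal.antidiagonal j,
        PowerSeries.coeff (R := ℝ) p.1 P₁⁻¹ * PowerSeries.coeff (R := ℝ) p.2 ((P₂ - P₁) * P₂⁻¹)|
      ≤ ∑ p ∈ Finset.HasAntidiagonal.antidiagonal j,
          |PowerSeries.coeff (R := ℝ) p.1 P₁⁻¹| * |PowerSeries.coeff (R := ℝ) p.2 ((P₂ - P₁) * P₂⁻¹)| := by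
        refine (Finset.abs_sum_le_sum_abs _ _).trans_eq ?_
        exact Finset.sum_congr rfl fun p _ => abs_mul _ _
    _ ≤ ∑ _p ∈ Finset.HasAntidiagonal.antidiagonal j, (q:ℝ) * T := Finset.sum_le_sum inner
    _ = ((j+1 : ℕ):ℝ) * ((q:ℝ) * T) := by
        rw [Finset.sum_const, Finset.Nat.card_antidiagonal, nsmul_eq_mul]
    _ ≤ (2*(j:ℝ)) * ((q:ℝ) * T) := by
        refine mul_le_mul_of_nonneg_right ?_ (by positivity)
        have : (1:ℝ) ≤ (j:ℝ) := by exact_mod_cast hj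
        push_cast
        linarith
    _ = 2*(q:ℝ)*M^2*(c⁻¹)^(q-1) * δ * (j:ℝ) * c^(j-1) := by
        rw [hT]; ring
end

section
/- Let p ≥ 1, let ψ₀, ψ₁, ψ₂, … and φ₁, …, φ_p be real numbers, and let m, k* ≥ 1 be integers. For an integer n let I(n) = 1 if n ≥ m + k* and I(n) = 0 otherwise. Then for every integer s with s ≥ p, setting t = m + k* + s, ∑_{ℓ=0}^{t−1} ψ_ℓ · [I(t−ℓ) − ∑_{j=1}^{p} φ_j · I(t−j−ℓ)] = (1 − ∑_{j=1}^{p} φ_j) · ∑_{ℓ=0}^{s−p} ψ_ℓ + ∑_{ℓ=0}^{p−1} ψ_{s−ℓ} · (1 − ∑_{j=1}^{ℓ} φ_j), where the inner sum ∑_{j=1}^{0} φ_j is empty (equal to 0). -/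
open scoped BigOperators

/-- The indicator `I(n) = 1` if `n ≥ m + k*` and `0` otherwise, for integers `n`. -/
noncomputable def ind (m kstar : ℕ) (n : ℤ) : ℝ :=
  if ((m : ℤ) + kstar) ≤ n then 1 else 0

lemma ind_eval (m kstar s a : ℕ) :
    ind m kstar ((m + kstar + s : ℤ) - a) = if a ≤ s then 1 else 0 := by
  unfold ind
  split_ifs with h1 h2 <;> first | rfl | omega

lemma ind_eval2 (m kstar s j ℓ : ℕ) :
    ind m kstar ((m + kstar + s : ℤ) - j - ℓ) = if j + ℓ ≤ s then 1 else 0 := by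
  unfold ind
  split_ifs with h1 h2 <;> first | rfl | omega

theorem statement10 (p : ℕ) (hp : 1 ≤ p) (ψ φ : ℕ → ℝ) (m kstar : ℕ)
    (hm : 1 ≤ m) (hk : 1 ≤ kstar) (s : ℕ) (hs : p ≤ s) :
    ∑ ℓ ∈ Finset.range (m + kstar + s),
        ψ ℓ * (ind m kstar ((m + kstar + s : ℤ) - ℓ)
          - ∑ j ∈ Finset.Icc 1 p, φ j * ind m kstar ((m + kstar + s : ℤ) - j - ℓ))
      = (1 - ∑ j ∈ Finset.Icc 1 p, φ j) * (∑ ℓ ∈ Finset.range (s - p + 1), ψ ℓ)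
        + ∑ ℓ ∈ Finset.range p, ψ (s - ℓ) * (1 - ∑ j ∈ Finset.Icc 1 ℓ, φ j) := by
  set g : ℕ → ℝ := fun ℓ =>
    if ℓ ≤ s then ψ ℓ * (1 - ∑ j ∈ Finset.Icc 1 (min p (s - ℓ)), φ j) else 0 with hg
  have hterm : ∀ ℓ : ℕ, ψ ℓ * (ind m kstar ((m + kstar + s : ℤ) - ℓ)
          - ∑ j ∈ Finset.Icc 1 p, φ j * ind m kstar ((m + kstar + s : ℤ) - j - ℓ))
      = g ℓ := by
    intro ℓ
    have hinner : ∑ j ∈ Finset.Icc 1 p, φ j * ind m kstar ((m + kstar + s : ℤ) - j - ℓ)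
        = ∑ j ∈ Finset.Icc 1 p, (if j + ℓ ≤ s then φ j else 0) := by
      refine Finset.sum_congr rfl fun j hj => ?_
      rw [ind_eval2]
      split_ifs <;> simp
    rw [ind_eval, hinner, ← Finset.sum_filter]
    by_cases h : ℓ ≤ s
    · have hfil : (Finset.Icc 1 p).filter (fun j => j + ℓ ≤ s)
          = Finset.Icc 1 (min p (s - ℓ)) := by
        ext j; simp; omega
      rw [hfil, hg]
      simp [h]
    · have hfil : (Finset.Icc 1 p).filter (fun j => j + ℓ ≤ s) = ∅ := by
        ext j; simp; omega
      rw [hfil, hg]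
      simp [h]
  rw [Finset.sum_congr rfl fun ℓ _ => hterm ℓ]
  have htrunc : ∑ ℓ ∈ Finset.range (m + kstar + s), g ℓ
      = ∑ ℓ ∈ Finset.range (s + 1), g ℓ := by
    refine (Finset.sum_subset (by apply Finset.range_subset_range.2; omega) ?_).symm
    intro ℓ _ hℓ
    simp only [Finset.mem_range, not_lt] at hℓ
    simp [hg, show ¬ ℓ ≤ s by omega]
  rw [htrunc]
  have hsplit : ∑ ℓ ∈ Finset.range (s + 1), g ℓ
      = ∑ ℓ ∈ Finset.range (s - p + 1), g ℓ + ∑ ℓ ∈ Finset.Ico (s - p + 1) (s + 1), g ℓ := by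
    rw [Finset.range_eq_Ico, Finset.range_eq_Ico]
    exact (Finset.sum_Ico_consecutive g (by omega : 0 ≤ s - p + 1)
      (by omega : s - p + 1 ≤ s + 1)).symm
  rw [hsplit]
  congr 1
  · rw [Finset.mul_sum]
    refine Finset.sum_congr rfl fun ℓ hℓ => ?_
    simp only [Finset.mem_range] at hℓ
    have h1 : ℓ ≤ s := by omega
    have h2 : min p (s - ℓ) = p := by omega
    simp [hg, h1, h2, mul_comm]
  · rw [Finset.sum_Ico_eq_sum_range]
    have hlen : s + 1 - (s - p + 1) = p := by omega
    rw [hlen, ← Finset.sum_range_reflect (fun ℓ => ψ (s - ℓ) * (1 - ∑ j ∈ Finset.Icc 1 ℓ, φ j)) p]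
    refine Finset.sum_congr rfl fun j hj => ?_
    simp only [Finset.mem_range] at hj
    have h1 : s - p + 1 + j ≤ s := by omega
    have h2 : min p (s - (s - p + 1 + j)) = p - 1 - j := by omega
    have h3 : s - (p - 1 - j) = s - p + 1 + j := by omega
    simp only [hg, h1, if_true, h2, h3]
end
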